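/- arXiv:1702.07175 — 3 statements merged into one kernel-verified Lean document; each statement's English description precedes it below -/
import Mathlib

section
/- Let (X,d,μ) be a proper metric measure space satisfying the δ-annular decay property for some δ ∈ (0,1], and ϱ a continuous admissible radius function on a bounded domain Ω with concave modulus of continuity ω̂ satisfying max{t, ω_ϱ(t)} ≤ ω̂(t). Then there is a constant C = C(D_δ, μ) > 0 such that for every compact K ⊆ Ω and all x, y ∈ K, μ(B_x △ B_y)/max{μ(B_x),μ(B_y)} ≤ C (ω̂(d(x,y))/ϱ_K)^δ. -/
open MeasureTheory Metric Set

theorem measure_symmDiff_ratio_le_of_continuous_radius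
    {X : Type*} [MetricSpace X] [ProperSpace X] [MeasurableSpace X] (μ : Measure X)
    (δ Dδ : ℝ) (hδ : 0 < δ) (hδ1 : δ ≤ 1) (hDδ : 1 ≤ Dδ)
    (hballs : ∀ (x : X) (r : ℝ), 0 < r → 0 < μ (closedBall x r) ∧ μ (closedBall x r) < ⊤)
    (hAD : ∀ (x : X) (r R : ℝ), 0 < r → r ≤ R →
      μ (closedBall x R \ closedBall x r) ≤
        ENNReal.ofReal (Dδ * (((R - r) / R) ^ δ)) * μ (closedBall x R))
    (Ω : Set X) (hΩopen : IsOpen Ω) (hΩbdd : Bornology.IsBounded Ω)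
    (ϱ : X → ℝ) (hϱcont : ContinuousOn ϱ (closure Ω))
    (hadm : ∀ x ∈ Ω, 0 < ϱ x ∧ ϱ x ≤ infDist x (frontier Ω))
    (hϱ0 : ∀ x ∈ frontier Ω, ϱ x = 0)
    (ωhat : ℝ → ℝ)
    (hconc : ConcaveOn ℝ (Set.Icc 0 (Metric.diam Ω)) ωhat)
    (hmono : MonotoneOn ωhat (Set.Icc 0 (Metric.diam Ω)))
    (hcont : ContinuousOn ωhat (Set.Icc 0 (Metric.diam Ω)))
    (h0 : ωhat 0 = 0)
    (hge : ∀ t ∈ Set.Icc 0 (Metric.diam Ω), t ≤ ωhat t)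
    (hmod : ∀ x ∈ Ω, ∀ y ∈ Ω, |ϱ x - ϱ y| ≤ ωhat (dist x y)) :
    ∃ C > 0, ∀ (K : Set X), IsCompact K → K ⊆ Ω → ∀ x ∈ K, ∀ y ∈ K,
      (μ (symmDiff (closedBall x (ϱ x)) (closedBall y (ϱ y)))).toReal /
          max (μ (closedBall x (ϱ x))).toReal (μ (closedBall y (ϱ y))).toReal ≤
        C * (ωhat (dist x y) / sInf (ϱ '' K)) ^ δ := by
  refine ⟨4 * Dδ, by linarith, ?_⟩
  intro K hK hKΩ x hx y hy
  have hxΩ := hKΩ hx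
  have hyΩ := hKΩ hy
  have hϱx : 0 < ϱ x := (hadm x hxΩ).1
  have hϱy : 0 < ϱ y := (hadm y hyΩ).1
  set ρK := sInf (ϱ '' K) with hρKdef
  -- positivity of the infimum
  have hKcl : K ⊆ closure Ω := hKΩ.trans subset_closure
  have hcontK : ContinuousOn ϱ K := hϱcont.mono hKcl
  obtain ⟨z, hzK, hzmin⟩ := hK.exists_isMinOn ⟨x, hx⟩ hcontK
  have hbdd : BddBelow (ϱ '' K) := ⟨ϱ z, by rintro _ ⟨w, hw, rfl⟩; exact hzmin hw⟩
  have hρKz : ϱ z ≤ ρK :=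
    le_csInf ⟨ϱ x, mem_image_of_mem _ hx⟩ (by rintro _ ⟨w, hw, rfl⟩; exact hzmin hw)
  have hρKpos : 0 < ρK := lt_of_lt_of_le (hadm z (hKΩ hzK)).1 hρKz
  have hρKx : ρK ≤ ϱ x := csInf_le hbdd (mem_image_of_mem _ hx)
  have hρKy : ρK ≤ ϱ y := csInf_le hbdd (mem_image_of_mem _ hy)
  set d := dist x y with hddef
  have hd0 : 0 ≤ d := dist_nonneg
  have hddiam : d ∈ Icc 0 (diam Ω) := ⟨hd0, dist_le_diam_of_mem hΩbdd hxΩ hyΩ⟩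
  have hωd : d ≤ ωhat d := hge d hddiam
  have hω0 : 0 ≤ ωhat d := hd0.trans hωd
  -- measures
  obtain ⟨hMxpos, hMxfin⟩ := hballs x (ϱ x) hϱx
  obtain ⟨hMypos, hMyfin⟩ := hballs y (ϱ y) hϱy
  have hMxr : 0 < (μ (closedBall x (ϱ x))).toReal :=
    ENNReal.toReal_pos hMxpos.ne' hMxfin.ne
  have hmaxpos : 0 < max (μ (closedBall x (ϱ x))).toReal (μ (closedBall y (ϱ y))).toReal :=
    lt_max_of_lt_left hMxr
  set t := (ωhat d / ρK) ^ δ with htdef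
  have ht0 : 0 ≤ t := Real.rpow_nonneg (div_nonneg hω0 hρKpos.le) δ
  -- the symmetric difference is always at most the union
  have hsd_le : μ (symmDiff (closedBall x (ϱ x)) (closedBall y (ϱ y))) ≤
      μ (closedBall x (ϱ x) \ closedBall y (ϱ y)) +
      μ (closedBall y (ϱ y) \ closedBall x (ϱ x)) := by
    rw [Set.symmDiff_def]
    exact measure_union_le _ _
  by_cases hcase : d < ρK
  · -- main case : annular decay
    have main : ∀ a b : X, a ∈ K → b ∈ K → dist a b = d →
        μ (closedBall a (ϱ a) \ closedBall b (ϱ b)) ≤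
          ENNReal.ofReal (2 * Dδ * t) * μ (closedBall a (ϱ a)) := by
      intro a b haK hbK hdab
      have haΩ := hKΩ haK; have hbΩ := hKΩ hbK
      have hϱa := (hadm a haΩ).1; have hϱb := (hadm b hbΩ).1
      have hρKa : ρK ≤ ϱ a := csInf_le hbdd (mem_image_of_mem _ haK)
      have hρKb : ρK ≤ ϱ b := csInf_le hbdd (mem_image_of_mem _ hbK)
      set r := min (ϱ a) (ϱ b - d) with hrdef
      have hrpos : 0 < r := lt_min hϱa (by linarith)
      have hrle : r ≤ ϱ a := min_le_left _ _
      have hsub : closedBall a (ϱ a) \ closedBall b (ϱ b) ⊆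
          closedBall a (ϱ a) \ closedBall a r := by
        rintro w ⟨hw1, hw2⟩
        refine ⟨hw1, fun hw3 => hw2 ?_⟩
        have hwa : dist w a ≤ ϱ b - d :=
          le_trans (mem_closedBall.mp hw3) (min_le_right _ _)
        rw [mem_closedBall]
        calc dist w b ≤ dist w a + dist a b := dist_triangle w a b
          _ ≤ (ϱ b - d) + d := by rw [hdab]; linarith
          _ = ϱ b := by ring
      have habs : |ϱ a - ϱ b| ≤ ωhat d := by rw [← hdab]; exact hmod a haΩ b hbΩ
      have habs1 : ϱ a - ϱ b ≤ ωhat d := le_of_abs_le habs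
      have hnum : ϱ a - r ≤ 2 * ωhat d := by
        rcases le_total (ϱ a) (ϱ b - d) with h | h
        · rw [hrdef, min_eq_left h]; linarith
        · rw [hrdef, min_eq_right h]; linarith
      have hfrac : (ϱ a - r) / ϱ a ≤ 2 * ωhat d / ρK :=
        div_le_div₀ (by positivity) hnum hρKpos hρKa
      have h1 : ((ϱ a - r) / ϱ a) ^ δ ≤ (2 * ωhat d / ρK) ^ δ :=
        Real.rpow_le_rpow (div_nonneg (by linarith) hϱa.le) hfrac hδ.le
      have h2 : (2 * ωhat d / ρK) ^ δ ≤ 2 * t := by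
        rw [htdef, mul_div_assoc,
          Real.mul_rpow (by norm_num) (div_nonneg hω0 hρKpos.le)]
        have h2d : (2:ℝ) ^ δ ≤ 2 := by
          calc (2:ℝ) ^ δ ≤ (2:ℝ) ^ (1:ℝ) :=
                Real.rpow_le_rpow_of_exponent_le one_le_two hδ1
            _ = 2 := Real.rpow_one 2
        exact mul_le_mul_of_nonneg_right h2d
          (Real.rpow_nonneg (div_nonneg hω0 hρKpos.le) δ)
      have hreal : Dδ * (((ϱ a - r) / ϱ a) ^ δ) ≤ 2 * Dδ * t := by
        nlinarith [h1.trans h2]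
      calc μ (closedBall a (ϱ a) \ closedBall b (ϱ b))
          ≤ μ (closedBall a (ϱ a) \ closedBall a r) := measure_mono hsub
        _ ≤ ENNReal.ofReal (Dδ * (((ϱ a - r) / ϱ a) ^ δ)) * μ (closedBall a (ϱ a)) := by
            have := hAD a r (ϱ a) hrpos hrle
            simpa using this
        _ ≤ ENNReal.ofReal (2 * Dδ * t) * μ (closedBall a (ϱ a)) :=
            mul_le_mul_left (ENNReal.ofReal_le_ofReal hreal) _
    have hx1 := main x y hx hy rfl
    have hy1 := main y x hy hx (by rw [hddef, dist_comm])
    set M := max (μ (closedBall x (ϱ x))) (μ (closedBall y (ϱ y))) with hMdef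
    have hMfin : M ≠ ⊤ := by
      rw [hMdef]
      exact (max_lt hMxfin hMyfin).ne
    have hsd2 : μ (symmDiff (closedBall x (ϱ x)) (closedBall y (ϱ y))) ≤
        ENNReal.ofReal (4 * Dδ * t) * M := by
      have h4 : ENNReal.ofReal (4 * Dδ * t) =
          ENNReal.ofReal (2 * Dδ * t) + ENNReal.ofReal (2 * Dδ * t) := by
        rw [← ENNReal.ofReal_add (by positivity) (by positivity)]
        ring_nf
      calc μ (symmDiff (closedBall x (ϱ x)) (closedBall y (ϱ y)))
          ≤ μ (closedBall x (ϱ x) \ closedBall y (ϱ y)) +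
            μ (closedBall y (ϱ y) \ closedBall x (ϱ x)) := hsd_le
        _ ≤ ENNReal.ofReal (2 * Dδ * t) * μ (closedBall x (ϱ x)) +
            ENNReal.ofReal (2 * Dδ * t) * μ (closedBall y (ϱ y)) := add_le_add hx1 hy1
        _ ≤ ENNReal.ofReal (2 * Dδ * t) * M + ENNReal.ofReal (2 * Dδ * t) * M :=
            add_le_add (mul_le_mul_right (le_max_left _ _) _)
              (mul_le_mul_right (le_max_right _ _) _)
        _ = ENNReal.ofReal (4 * Dδ * t) * M := by rw [h4, add_mul]
    have hMr : M.toReal = max (μ (closedBall x (ϱ x))).toReal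
        (μ (closedBall y (ϱ y))).toReal := by
      rw [hMdef]
      exact ENNReal.toReal_max hMxfin.ne hMyfin.ne
    have hfinal : (μ (symmDiff (closedBall x (ϱ x)) (closedBall y (ϱ y)))).toReal ≤
        4 * Dδ * t * M.toReal := by
      have hle := ENNReal.toReal_mono (by
          exact ENNReal.mul_ne_top ENNReal.ofReal_ne_top hMfin) hsd2
      rwa [ENNReal.toReal_mul, ENNReal.toReal_ofReal (by positivity)] at hle
    rw [div_le_iff₀ hmaxpos]
    rw [← hMr]
    exact hfinal
  · -- trivial case : the right-hand side is at least 2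
    push_neg at hcase
    have hbase : 1 ≤ ωhat d / ρK := (one_le_div hρKpos).2 (le_trans hcase hωd)
    have ht1 : 1 ≤ t := by
      rw [htdef]
      calc (1:ℝ) = (ωhat d / ρK) ^ (0:ℝ) := (Real.rpow_zero _).symm
        _ ≤ (ωhat d / ρK) ^ δ := Real.rpow_le_rpow_of_exponent_le hbase hδ.le
    have hsdreal : (μ (symmDiff (closedBall x (ϱ x)) (closedBall y (ϱ y)))).toReal ≤
        (μ (closedBall x (ϱ x))).toReal + (μ (closedBall y (ϱ y))).toReal := by
      have h1 : μ (closedBall x (ϱ x) \ closedBall y (ϱ y)) +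
          μ (closedBall y (ϱ y) \ closedBall x (ϱ x)) ≤
          μ (closedBall x (ϱ x)) + μ (closedBall y (ϱ y)) :=
        add_le_add (measure_mono diff_subset) (measure_mono diff_subset)
      have h2 := hsd_le.trans h1
      have hle := ENNReal.toReal_mono (ENNReal.add_ne_top.mpr ⟨hMxfin.ne, hMyfin.ne⟩) h2
      rwa [ENNReal.toReal_add hMxfin.ne hMyfin.ne] at hle
    have hratio : (μ (symmDiff (closedBall x (ϱ x)) (closedBall y (ϱ y)))).toReal /
        max (μ (closedBall x (ϱ x))).toReal (μ (closedBall y (ϱ y))).toReal ≤ 2 := by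
      rw [div_le_iff₀ hmaxpos]
      calc (μ (symmDiff (closedBall x (ϱ x)) (closedBall y (ϱ y)))).toReal
          ≤ (μ (closedBall x (ϱ x))).toReal + (μ (closedBall y (ϱ y))).toReal := hsdreal
        _ ≤ max (μ (closedBall x (ϱ x))).toReal (μ (closedBall y (ϱ y))).toReal +
            max (μ (closedBall x (ϱ x))).toReal (μ (closedBall y (ϱ y))).toReal :=
            add_le_add (le_max_left _ _) (le_max_right _ _)
        _ = 2 * max (μ (closedBall x (ϱ x))).toReal (μ (closedBall y (ϱ y))).toReal := by ring
    calc (μ (symmDiff (closedBall x (ϱ x)) (closedBall y (ϱ y)))).toReal /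
        max (μ (closedBall x (ϱ x))).toReal (μ (closedBall y (ϱ y))).toReal ≤ 2 := hratio
      _ ≤ 4 * Dδ * 1 := by linarith
      _ ≤ 4 * Dδ * t := by nlinarith
end

section
/- Let (X,d) be a geodesic metric space, Ω a bounded domain, ϱ a continuous admissible radius function with concave modulus of continuity ω̂ satisfying ω̂(t) ≥ max{t, |ϱ(x)−ϱ(y)| when d(x,y)=t}. Then for any u continuous on the closure of Ω, any compact K ⊆ Ω, and all x, y ∈ K: |S u(x) − S u(y)| ≤ ω_{u,K̃}(ω̂(d(x,y))), where S u(x) = (sup_{B_x} u + inf_{B_x} u)/2, K̃ = ∪_{x∈K} B_x, and ω_{u,K̃} is a concave modulus of continuity of u on K̃. -/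
open Metric Set

/-- The mid-range operator `S u (x) = (sup_{B_x} u + inf_{B_x} u) / 2`. -/
noncomputable def midOp {X : Type*} [MetricSpace X] (ϱ : X → ℝ) (u : X → ℝ) : X → ℝ :=
  fun x => (sSup (u '' Metric.closedBall x (ϱ x)) + sInf (u '' Metric.closedBall x (ϱ x))) / 2

theorem midOp_modulus_estimate
    {X : Type*} [MetricSpace X]
    (hgeo : ∀ x y : X, ∀ s : ℝ, 0 ≤ s → s ≤ dist x y →
      ∃ z : X, dist x z = s ∧ dist z y = dist x y - s)
    (Ω : Set X) (hΩopen : IsOpen Ω) (hΩbdd : Bornology.IsBounded Ω)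
    (ϱ : X → ℝ) (hϱcont : ContinuousOn ϱ (closure Ω))
    (hadm : ∀ x ∈ Ω, 0 < ϱ x ∧ ϱ x ≤ infDist x (frontier Ω))
    (hϱ0 : ∀ x ∈ frontier Ω, ϱ x = 0)
    (ωhat : ℝ → ℝ)
    (hhconc : ConcaveOn ℝ (Set.Ici 0) ωhat) (hhmono : MonotoneOn ωhat (Set.Ici 0))
    (hhcont : ContinuousOn ωhat (Set.Ici 0)) (hh0 : ωhat 0 = 0)
    (hhge : ∀ t : ℝ, 0 ≤ t → t ≤ ωhat t)
    (hhmod : ∀ x ∈ Ω, ∀ y ∈ Ω, |ϱ x - ϱ y| ≤ ωhat (dist x y))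
    (u : X → ℝ) (hu : ContinuousOn u (closure Ω))
    (K : Set X) (hK : IsCompact K) (hKΩ : K ⊆ Ω)
    (ω : ℝ → ℝ)
    (hconc : ConcaveOn ℝ (Set.Ici 0) ω) (hmono : MonotoneOn ω (Set.Ici 0))
    (hcont : ContinuousOn ω (Set.Ici 0)) (h0 : ω 0 = 0)
    (hmod : ∀ s ∈ ⋃ x ∈ K, closedBall x (ϱ x), ∀ t ∈ ⋃ x ∈ K, closedBall x (ϱ x),
      |u s - u t| ≤ ω (dist s t)) :
    ∀ x ∈ K, ∀ y ∈ K, |midOp ϱ u x - midOp ϱ u y| ≤ ω (ωhat (dist x y)) := by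
  -- a nearest-point selection in a closed ball, via the geodesic hypothesis
  have near : ∀ (p c : X) (r : ℝ), 0 ≤ r →
      ∃ a ∈ closedBall c r, dist p a ≤ max 0 (dist p c - r) := by
    intro p c r hr
    by_cases h : dist p c ≤ r
    · exact ⟨p, by simpa [mem_closedBall] using h, by simp [le_max_iff]⟩
    · push_neg at h
      obtain ⟨z, hz1, hz2⟩ := hgeo p c (dist p c - r) (by linarith) (by linarith)
      refine ⟨z, ?_, ?_⟩
      · rw [mem_closedBall, hz2]; linarith
      · rw [hz1]; exact le_max_right _ _
  -- boundedness and nonemptiness of images of balls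
  have hbdd : ∀ x ∈ K, BddAbove (u '' closedBall x (ϱ x)) ∧
      BddBelow (u '' closedBall x (ϱ x)) ∧ (u '' closedBall x (ϱ x)).Nonempty := by
    intro x hxK
    have hx : x ∈ Ω := hKΩ hxK
    have hϱx : 0 < ϱ x := (hadm x hx).1
    have hxB : x ∈ closedBall x (ϱ x) := mem_closedBall_self hϱx.le
    have hxU : x ∈ ⋃ z ∈ K, closedBall z (ϱ z) := mem_biUnion hxK hxB
    have hb : ∀ s ∈ closedBall x (ϱ x), |u s - u x| ≤ ω (ϱ x) := by
      intro s hs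
      have hsU : s ∈ ⋃ z ∈ K, closedBall z (ϱ z) := mem_biUnion hxK hs
      refine (hmod s hsU x hxU).trans (hmono dist_nonneg hϱx.le ?_)
      exact mem_closedBall.mp hs
    refine ⟨⟨u x + ω (ϱ x), ?_⟩, ⟨u x - ω (ϱ x), ?_⟩, ⟨u x, x, hxB, rfl⟩⟩
    · rintro v ⟨s, hs, rfl⟩
      have := abs_le.mp (hb s hs); linarith [this.2]
    · rintro v ⟨s, hs, rfl⟩
      have := abs_le.mp (hb s hs); linarith [this.1]
  -- the one-sided estimate
  have key : ∀ x ∈ K, ∀ y ∈ K,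
      midOp ϱ u x - midOp ϱ u y ≤ ω (ωhat (dist x y)) := by
    intro x hxK y hyK
    have hx : x ∈ Ω := hKΩ hxK
    have hy : y ∈ Ω := hKΩ hyK
    have hϱx : 0 < ϱ x := (hadm x hx).1
    have hϱy : 0 < ϱ y := (hadm y hy).1
    set d := dist x y with hd
    have hd0 : 0 ≤ d := dist_nonneg
    set H := ωhat d with hH
    have hdH : d ≤ H := hhge d hd0
    have hH0 : 0 ≤ H := le_trans hd0 hdH
    have hϱd := abs_le.mp (hhmod x hx y hy)
    obtain ⟨hAub, hAlb, hAne⟩ := hbdd x hxK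
    obtain ⟨hBub, hBlb, hBne⟩ := hbdd y hyK
    set A := u '' closedBall x (ϱ x) with hA
    set B := u '' closedBall y (ϱ y) with hB
    -- main inequality on sums
    have main : sSup A + sInf A ≤ sSup B + sInf B + 2 * ω H := by
      have h1 : sSup A ≤ sSup B + sInf B + 2 * ω H - sInf A := by
        apply csSup_le hAne
        rintro v ⟨p, hp, rfl⟩
        have h2 : u p + sInf A - sSup B - 2 * ω H ≤ sInf B := by
          apply le_csInf hBne
          rintro w ⟨q, hq, rfl⟩
          -- find a ∈ B_y near p, and b ∈ B_x near q
          obtain ⟨a, haB, hpa⟩ := near p y (ϱ y) hϱy.le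
          obtain ⟨b, hbB, hqb⟩ := near q x (ϱ x) hϱx.le
          set s := dist p a with hs
          set t := dist q b with ht
          have hs0 : 0 ≤ s := dist_nonneg
          have ht0 : 0 ≤ t := dist_nonneg
          have hpy : dist p y ≤ ϱ x + d := by
            have := dist_triangle p x y
            have hpx : dist p x ≤ ϱ x := mem_closedBall.mp hp
            linarith
          have hqx : dist q x ≤ ϱ y + d := by
            have h3 := dist_triangle q y x
            have hqy : dist q y ≤ ϱ y := mem_closedBall.mp hq
            rw [dist_comm y x] at h3
            linarith
          have hsum : s + t ≤ 2 * H := by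
            have h4 : s ≤ max 0 (d + ϱ x - ϱ y) := by
              refine hpa.trans (max_le_max le_rfl ?_); linarith
            have h5 : t ≤ max 0 (d + ϱ y - ϱ x) := by
              refine hqb.trans (max_le_max le_rfl ?_); linarith
            rcases max_cases (0:ℝ) (d + ϱ x - ϱ y) with ⟨e1, e2⟩ | ⟨e1, e2⟩ <;>
            rcases max_cases (0:ℝ) (d + ϱ y - ϱ x) with ⟨f1, f2⟩ | ⟨f1, f2⟩ <;>
            rw [e1] at h4 <;> rw [f1] at h5 <;> linarith [hϱd.1, hϱd.2]
          -- concavity: ω s + ω t ≤ 2 ω H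
          have hωconc : ω s + ω t ≤ 2 * ω H := by
            have hmem_s : s ∈ Set.Ici (0:ℝ) := hs0
            have hmem_t : t ∈ Set.Ici (0:ℝ) := ht0
            have hcc := hconc.2 hmem_s hmem_t (by norm_num : (0:ℝ) ≤ 1/2)
              (by norm_num : (0:ℝ) ≤ 1/2) (by norm_num)
            have hmidmem : (0:ℝ) ≤ (1/2 : ℝ) * s + (1/2 : ℝ) * t := by positivity
            have hmid : (1/2:ℝ) * s + (1/2:ℝ) * t ≤ H := by linarith
            have := hmono hmidmem hH0 hmid
            simp only [smul_eq_mul] at hcc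
            linarith
          -- modulus estimates
          have hxU : ∀ z ∈ closedBall x (ϱ x), z ∈ ⋃ w ∈ K, closedBall w (ϱ w) :=
            fun z hz => mem_biUnion hxK hz
          have hyU : ∀ z ∈ closedBall y (ϱ y), z ∈ ⋃ w ∈ K, closedBall w (ϱ w) :=
            fun z hz => mem_biUnion hyK hz
          have hpa' : u p - u a ≤ ω s :=
            le_trans (le_abs_self _) (hmod p (hxU p hp) a (hyU a haB))
          have hqb' : u b - u q ≤ ω t := by
            have := le_trans (le_abs_self _) (hmod b (hxU b hbB) q (hyU q hq))
            rwa [dist_comm b q] at this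
          have haS : u a ≤ sSup B := le_csSup hBub ⟨a, haB, rfl⟩
          have hbI : sInf A ≤ u b := csInf_le hAlb ⟨b, hbB, rfl⟩
          linarith
        linarith
      linarith
    simp only [midOp, ← hA, ← hB]
    linarith
  intro x hxK y hyK
  rw [abs_sub_le_iff]
  refine ⟨key x hxK y hyK, ?_⟩
  rw [dist_comm]
  exact key y hyK x hxK
end

section
/- Let (X,d,μ) be a proper geodesic metric measure space with δ-annular decay (δ ∈ (0,1]), Ω a bounded domain, and ϱ an L-Lipschitz admissible radius function (L ≥ 1) satisfying λ dist(x,∂Ω)^β ≤ ϱ(x) ≤ ε dist(x,∂Ω) on Ω with 0 < λ ≤ ℓ(Ω)^{1−β} ε, where ℓ(Ω) = sup_{x∈Ω} dist(x,∂Ω). Assume |α| < 1/L, 0 < ε < 1 − L|α|, and 1 ≤ β < log(1/(L|α|)) / log(1/(1−ε)). Then every u continuous on the closure of Ω with T_α u = u, where T_α u(x) = (α/2)(sup_{B_x} u + inf_{B_x} u) + (1−α) ⨍_{B_x} u dμ, is locally δ-Hölder continuous in Ω; if δ = 1, u is locally Lipschitz in Ω. -/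
open MeasureTheory Metric Set

set_option maxHeartbeats 4000000 in
theorem holder_regularity_of_alpha_mean_value_property
    {X : Type*} [MetricSpace X] [ProperSpace X] [MeasurableSpace X] [BorelSpace X]
    (μ : Measure X)
    (hgeo : ∀ x y : X, ∀ s : ℝ, 0 ≤ s → s ≤ dist x y →
      ∃ z : X, dist x z = s ∧ dist z y = dist x y - s)
    (δ Dδ : ℝ) (hδ : 0 < δ) (hδ1 : δ ≤ 1) (hDδ : 1 ≤ Dδ)
    (hballs : ∀ (x : X) (r : ℝ), 0 < r → 0 < μ (closedBall x r) ∧ μ (closedBall x r) < ⊤)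
    (hAD : ∀ (x : X) (r R : ℝ), 0 < r → r ≤ R →
      μ (closedBall x R \ closedBall x r) ≤
        ENNReal.ofReal (Dδ * (((R - r) / R) ^ δ)) * μ (closedBall x R))
    (Ω : Set X) (hΩopen : IsOpen Ω) (hΩbdd : Bornology.IsBounded Ω)
    (ϱ : X → ℝ) (hϱcont : ContinuousOn ϱ (closure Ω))
    (hadm : ∀ x ∈ Ω, 0 < ϱ x ∧ ϱ x ≤ infDist x (frontier Ω))
    (hϱ0 : ∀ x ∈ frontier Ω, ϱ x = 0)
    (L : ℝ) (hL : 1 ≤ L)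
    (hLip : ∀ x ∈ Ω, ∀ y ∈ Ω, |ϱ x - ϱ y| ≤ L * dist x y)
    (lam β ε α : ℝ)
    (hlam0 : 0 < lam)
    (hlam : lam ≤ (sSup ((fun x => infDist x (frontier Ω)) '' Ω)) ^ (1 - β) * ε)
    (hbounds : ∀ x ∈ Ω,
      lam * infDist x (frontier Ω) ^ β ≤ ϱ x ∧ ϱ x ≤ ε * infDist x (frontier Ω))
    (hαL : |α| < L⁻¹) (hε0 : 0 < ε) (hε : ε < 1 - L * |α|)
    (hβ1 : 1 ≤ β)
    (hβ : β < Real.log (1 / (L * |α|)) / Real.log (1 / (1 - ε)))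
    (u : X → ℝ) (hu : ContinuousOn u (closure Ω))
    (hfix : ∀ x ∈ Ω, u x =
      (α / 2) * (sSup (u '' closedBall x (ϱ x)) + sInf (u '' closedBall x (ϱ x))) +
        (1 - α) * ⨍ y in closedBall x (ϱ x), u y ∂μ) :
    ∀ (K : Set X), IsCompact K → K ⊆ Ω →
      ∃ C ≥ 0, ∀ x ∈ K, ∀ y ∈ K, |u x - u y| ≤ C * dist x y ^ δ := by
  intro K hKcpt hKsub
  rcases K.eq_empty_or_nonempty with rfl | ⟨x0, hx0K⟩
  · exact ⟨0, le_refl 0, by simp⟩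
  have hx0Ω : x0 ∈ Ω := hKsub hx0K
  -- basic numeric facts
  have hL0 : (0:ℝ) < L := lt_of_lt_of_le one_pos hL
  have hαnn : (0:ℝ) ≤ |α| := abs_nonneg α
  have hα1 : |α| < 1 := lt_of_lt_of_le hαL (by
    rw [inv_le_one_iff₀]; right; exact hL)
  have h1α : (0:ℝ) < 1 - α := by
    have := neg_abs_le α
    linarith [abs_nonneg α, hα1, le_abs_self α]
  have hLα1 : L * |α| < 1 := by
    have := (mul_lt_mul_iff_right₀ hL0).2 hαL
    rwa [mul_inv_cancel₀ (ne_of_gt hL0)] at this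
  have hε1 : ε < 1 := by nlinarith [mul_nonneg hL0.le hαnn]
  have h1ε : (0:ℝ) < 1 - ε := by linarith
  have hβ0 : (0:ℝ) ≤ β := le_trans zero_le_one hβ1
  have hδ0 : (0:ℝ) ≤ δ := hδ.le
  -- closure of Ω is compact
  have hcpt : IsCompact (closure Ω) :=
    Metric.isCompact_of_isClosed_isBounded isClosed_closure hΩbdd.closure
  have hΩsub : Ω ⊆ closure Ω := subset_closure
  -- frontier is nonempty
  have hFne : (frontier Ω).Nonempty := by
    rcases Set.eq_empty_or_nonempty (frontier Ω) with hFe | h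
    · exfalso
      have h1 := (hadm x0 hx0Ω).1
      have h2 := (hadm x0 hx0Ω).2
      rw [hFe, Metric.infDist_empty] at h2
      linarith
    · exact h
  have hFclosed : IsClosed (frontier Ω) := isClosed_frontier
  -- positivity of infDist on Ω
  have hdd_pos : ∀ x ∈ Ω, 0 < infDist x (frontier Ω) := by
    intro x hx
    rcases (lt_or_eq_of_le (Metric.infDist_nonneg (s := frontier Ω) (x := x))) with h | h
    · exact h
    · exfalso
      obtain ⟨w, hwF, hwd⟩ := hFclosed.exists_infDist_eq_dist hFne x
      rw [← h] at hwd
      have : x = w := by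
        have := dist_eq_zero.1 hwd.symm
        exact this
      subst this
      have : x ∈ closure Ω \ Ω := by rw [← hΩopen.frontier_eq]; exact hwF
      exact this.2 hx
  -- the bound M on |u|
  obtain ⟨zM, hzMmem, hzMmax⟩ :=
    hcpt.exists_isMaxOn ⟨x0, hΩsub hx0Ω⟩ (hu.abs)
  set M := |u zM| with hMdef
  have hM : ∀ z ∈ closure Ω, |u z| ≤ M := fun z hz => hzMmax hz
  have hM0 : 0 ≤ M := le_trans (abs_nonneg _) (hM x0 (hΩsub hx0Ω))
  -- closed balls of admissible radius stay in the closure of Ω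
  have hball_sub : ∀ x ∈ Ω, closedBall x (ϱ x) ⊆ closure Ω := by
    intro x hx z hz
    by_contra hzout
    have hT0 : 0 ≤ dist x z := dist_nonneg
    have hTle : dist x z ≤ infDist x (frontier Ω) := by
      have h1 : dist z x ≤ ϱ x := mem_closedBall.1 hz
      rw [dist_comm]
      exact le_trans h1 (hadm x hx).2
    set W : Set X := {w | w ∈ closure Ω ∧ dist x w + dist w z = dist x z} with hWdef
    have hWne : W.Nonempty := ⟨x, hΩsub hx, by simp⟩
    have hWclosed : IsClosed W := by
      have h1 : IsClosed {w : X | dist x w + dist w z = dist x z} :=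
        isClosed_eq (by fun_prop) continuous_const
      exact isClosed_closure.inter h1
    have hWcpt : IsCompact W := hcpt.of_isClosed_subset hWclosed (fun w hw => hw.1)
    obtain ⟨w, hwW, hwmax⟩ := hWcpt.exists_isMaxOn hWne
      ((continuous_const.dist continuous_id).continuousOn)
    have hwsum : dist x w + dist w z = dist x z := hwW.2
    have hs0T : dist x w ≤ dist x z := by
      have := dist_nonneg (x := w) (y := z); linarith
    have hs0lt : dist x w < dist x z := by
      rcases lt_or_eq_of_le hs0T with h | h
      · exact h
      · exfalso
        have hwz : dist w z = 0 := by linarith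
        have := dist_eq_zero.1 hwz
        exact hzout (this ▸ hwW.1)
    have hwF : w ∈ frontier Ω := by
      rw [frontier_eq_closure_inter_closure]
      refine ⟨hwW.1, ?_⟩
      rw [Metric.mem_closure_iff]
      intro ε' hε'
      have hσ0 : 0 < min (ε'/2) (dist x z - dist x w) := lt_min (by linarith) (by linarith)
      set σ := min (ε'/2) (dist x z - dist x w) with hσdef
      have hσle : σ ≤ dist w z := by
        have : dist w z = dist x z - dist x w := by linarith
        rw [this]; exact min_le_right _ _
      obtain ⟨v, hv1, hv2⟩ := hgeo w z σ hσ0.le hσle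
      refine ⟨v, ?_, ?_⟩
      · intro hvΩ
        have hvcl : v ∈ closure Ω := hΩsub hvΩ
        have hdvz : dist v z = dist x z - dist x w - σ := by rw [hv2]; linarith
        have hxv_ge : dist x w + σ ≤ dist x v := by
          have htri : dist x z ≤ dist x v + dist v z := dist_triangle x v z
          linarith
        have hxv_le : dist x v ≤ dist x w + σ := by
          have htri := dist_triangle x w v
          linarith [hv1]
        have hxv : dist x v = dist x w + σ := le_antisymm hxv_le hxv_ge
        have hvW : v ∈ W := ⟨hvcl, by rw [hxv, hdvz]; ring⟩
        have hle := hwmax hvW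
        simp only [mem_setOf_eq] at hle
        have : dist x v ≤ dist x w := hle
        linarith
      · calc dist w v = σ := hv1
          _ ≤ ε'/2 := min_le_left _ _
          _ < ε' := by linarith
    have : infDist x (frontier Ω) ≤ dist x w := Metric.infDist_le_dist_of_mem hwF
    linarith
  -- membership and depth of points of admissible balls
  have memdepth : ∀ ρ : ℝ, 0 < ρ → ∀ c ∈ Ω, ρ ≤ infDist c (frontier Ω) →
      ∀ z ∈ closedBall c (ϱ c), z ∈ Ω ∧ (1-ε)*ρ ≤ infDist z (frontier Ω) := by
    intro ρ hρ c hc hdc z hz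
    have hzc : dist z c ≤ ϱ c := mem_closedBall.1 hz
    have h1 : infDist c (frontier Ω) ≤ infDist z (frontier Ω) + dist c z :=
      Metric.infDist_le_infDist_add_dist
    have hϱc : ϱ c ≤ ε * infDist c (frontier Ω) := (hbounds c hc).2
    rw [dist_comm] at h1
    have hdd : (1-ε) * infDist c (frontier Ω) ≤ infDist z (frontier Ω) := by nlinarith
    have hz2 : (1-ε)*ρ ≤ infDist z (frontier Ω) := by nlinarith
    have hzΩ : z ∈ Ω := by
      have hzcl : z ∈ closure Ω := hball_sub c hc hz
      by_contra hzo
      have hzF : z ∈ frontier Ω := by rw [hΩopen.frontier_eq]; exact ⟨hzcl, hzo⟩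
      have h0 := Metric.infDist_zero_of_mem hzF
      nlinarith [mul_pos h1ε hρ]
    exact ⟨hzΩ, hz2⟩
  -- pulling a point into a ball along a geodesic
  have pull : ∀ (a y : X), y ∈ Ω → ∃ a', a' ∈ closedBall y (ϱ y) ∧
      dist a a' ≤ max (dist a y - ϱ y) 0 := by
    intro a y hy
    rcases le_or_gt (dist a y) (ϱ y) with h | h
    · exact ⟨a, mem_closedBall.2 (by rwa [dist_comm] at h ⊢), by simp⟩
    · obtain ⟨z, hz1, hz2⟩ := hgeo a y (dist a y - ϱ y)
        (by linarith) (by linarith [(hadm y hy).1])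
      refine ⟨z, ?_, ?_⟩
      · rw [mem_closedBall]
        have : dist z y = ϱ y := by rw [hz2]; ring
        rw [this]
      · rw [hz1]; exact le_max_left _ _
  -- comparison of suprema
  have sup_le : ∀ x ∈ Ω, ∀ y ∈ Ω, ∃ p p', p ∈ closedBall x (ϱ x) ∧ p' ∈ closedBall y (ϱ y) ∧
      dist p p' ≤ max (dist x y + ϱ x - ϱ y) 0 ∧
      sSup (u '' closedBall x (ϱ x)) - sSup (u '' closedBall y (ϱ y)) ≤ u p - u p' := by
    intro x hx y hy
    have hBx : IsCompact (closedBall x (ϱ x)) := isCompact_closedBall x (ϱ x)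
    have hBxne : (closedBall x (ϱ x)).Nonempty := ⟨x, mem_closedBall_self (hadm x hx).1.le⟩
    obtain ⟨p, hp, hpmax⟩ := hBx.exists_isMaxOn hBxne (hu.mono (hball_sub x hx))
    obtain ⟨p', hp', hd⟩ := pull p y hy
    have hSx : sSup (u '' closedBall x (ϱ x)) = u p := by
      apply IsGreatest.csSup_eq
      exact ⟨⟨p, hp, rfl⟩, fun v ⟨z, hz, hv⟩ => hv ▸ hpmax hz⟩
    have hSy : u p' ≤ sSup (u '' closedBall y (ϱ y)) := by
      apply le_csSup
      · exact ((isCompact_closedBall y (ϱ y)).image_of_continuousOn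
          (hu.mono (hball_sub y hy))).bddAbove
      · exact ⟨p', hp', rfl⟩
    refine ⟨p, p', hp, hp', ?_, by linarith [hSx, hSy]⟩
    refine le_trans hd (max_le_max ?_ le_rfl)
    have : dist p y ≤ dist p x + dist x y := dist_triangle p x y
    have hpx : dist p x ≤ ϱ x := mem_closedBall.1 hp
    rw [dist_comm x y] at *
    linarith
  -- comparison of infima
  have inf_le : ∀ x ∈ Ω, ∀ y ∈ Ω, ∃ q q', q ∈ closedBall y (ϱ y) ∧ q' ∈ closedBall x (ϱ x) ∧
      dist q q' ≤ max (dist x y + ϱ y - ϱ x) 0 ∧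
      sInf (u '' closedBall x (ϱ x)) - sInf (u '' closedBall y (ϱ y)) ≤ u q' - u q := by
    intro x hx y hy
    have hBy : IsCompact (closedBall y (ϱ y)) := isCompact_closedBall y (ϱ y)
    have hByne : (closedBall y (ϱ y)).Nonempty := ⟨y, mem_closedBall_self (hadm y hy).1.le⟩
    obtain ⟨q, hq, hqmin⟩ := hBy.exists_isMinOn hByne (hu.mono (hball_sub y hy))
    obtain ⟨q', hq', hd⟩ := pull q x hx
    have hIy : sInf (u '' closedBall y (ϱ y)) = u q := by
      apply IsLeast.csInf_eq
      exact ⟨⟨q, hq, rfl⟩, fun v ⟨z, hz, hv⟩ => hv ▸ hqmin hz⟩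
    have hIx : sInf (u '' closedBall x (ϱ x)) ≤ u q' := by
      apply csInf_le
      · exact ((isCompact_closedBall x (ϱ x)).image_of_continuousOn
          (hu.mono (hball_sub x hx))).bddBelow
      · exact ⟨q', hq', rfl⟩
    refine ⟨q, q', hq, hq', ?_, by linarith [hIy, hIx]⟩
    refine le_trans hd (max_le_max ?_ le_rfl)
    have : dist q x ≤ dist q y + dist y x := dist_triangle q y x
    have hqy : dist q y ≤ ϱ y := mem_closedBall.1 hq
    rw [dist_comm y x] at this
    linarith
  -- integrability
  have hμcl : μ (closure Ω) < ⊤ := by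
    obtain ⟨R0, hR0⟩ := (hΩbdd.closure).subset_closedBall x0
    refine lt_of_le_of_lt (measure_mono (hR0.trans
      (closedBall_subset_closedBall (le_max_left R0 1)))) ?_
    exact (hballs x0 (max R0 1) (lt_of_lt_of_le one_pos (le_max_right _ _))).2
  have hInt : ∀ s : Set X, MeasurableSet s → s ⊆ closure Ω → IntegrableOn u s μ := by
    intro s hms hsub
    have hμs : μ s < ⊤ := lt_of_le_of_lt (measure_mono hsub) hμcl
    refine ⟨(hu.mono hsub).aestronglyMeasurable hms, ?_⟩
    apply MeasureTheory.HasFiniteIntegral.restrict_of_bounded (C := M) hμs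
    exact (ae_restrict_iff' hms).2 (Filter.Eventually.of_forall (fun z hz => by
      rw [Real.norm_eq_abs]; exact hM z (hsub hz)))
  -- key average comparison
  have key : ∀ (B0 B1 : Set X) (κ : ℝ), MeasurableSet B0 → MeasurableSet B1 → B0 ⊆ B1 →
      B1 ⊆ closure Ω → 0 < μ B0 → μ B1 ≠ ⊤ →
      (μ (B1 \ B0)).toReal ≤ κ * (μ B1).toReal →
      |(⨍ z in B1, u z ∂μ) - ⨍ z in B0, u z ∂μ| ≤ 2*M*κ := by
    intro B0 B1 κ hm0 hm1 hsub01 hsubΩ hμ0 hμ1top hκ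
    have hμ0top : μ B0 ≠ ⊤ := fun h => hμ1top (top_le_iff.1 (h ▸ measure_mono hsub01))
    have hmdiff : MeasurableSet (B1 \ B0) := hm1.diff hm0
    have hunion : B0 ∪ (B1 \ B0) = B1 := Set.union_diff_cancel hsub01
    have hdisj : Disjoint B0 (B1 \ B0) := Set.disjoint_sdiff_right
    have hμadd : μ B1 = μ B0 + μ (B1 \ B0) := by
      have := measure_union (μ := μ) hdisj hmdiff
      rw [hunion] at this
      exact this
    have hμdtop : μ (B1 \ B0) ≠ ⊤ :=
      fun h => hμ1top (top_le_iff.1 (h ▸ measure_mono Set.diff_subset))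
    set m0 := (μ B0).toReal with hm0def
    set m1 := (μ B1).toReal with hm1def
    set Δr := (μ (B1 \ B0)).toReal with hΔdef
    have hm1eq : m1 = m0 + Δr := by
      rw [hm1def, hμadd, ENNReal.toReal_add hμ0top hμdtop]
    have hm0pos : 0 < m0 := ENNReal.toReal_pos (ne_of_gt hμ0) hμ0top
    have hΔnn : 0 ≤ Δr := ENNReal.toReal_nonneg
    have hm1pos : 0 < m1 := by rw [hm1eq]; linarith
    have hIB0 : IntegrableOn u B0 μ := hInt B0 hm0 (hsub01.trans hsubΩ)
    have hIBd : IntegrableOn u (B1 \ B0) μ := hInt _ hmdiff ((Set.diff_subset).trans hsubΩ)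
    set a := ∫ z in B0, u z ∂μ with hadef
    set e := ∫ z in (B1 \ B0), u z ∂μ with hedef
    have hsplit : ∫ z in B1, u z ∂μ = a + e := by
      rw [← hunion, MeasureTheory.setIntegral_union hdisj hmdiff hIB0 hIBd]
    have hae : |a| ≤ M * m0 := by
      have := MeasureTheory.norm_setIntegral_le_of_norm_le_const (μ := μ) (s := B0)
        (f := u) (C := M) (lt_top_iff_ne_top.2 hμ0top)
        (fun z hz => by rw [Real.norm_eq_abs]; exact hM z (hsubΩ (hsub01 hz)))
      rwa [Real.norm_eq_abs, measureReal_def] at this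
    have hee : |e| ≤ M * Δr := by
      have := MeasureTheory.norm_setIntegral_le_of_norm_le_const (μ := μ) (s := B1 \ B0)
        (f := u) (C := M) (lt_top_iff_ne_top.2 hμdtop)
        (fun z hz => by rw [Real.norm_eq_abs]; exact hM z (hsubΩ (Set.diff_subset hz)))
      rwa [Real.norm_eq_abs, measureReal_def] at this
    have hA1 : (⨍ z in B1, u z ∂μ) = m1⁻¹ * (a + e) := by
      rw [MeasureTheory.setAverage_eq, hsplit, smul_eq_mul, measureReal_def]
    have hA0 : (⨍ z in B0, u z ∂μ) = m0⁻¹ * a := by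
      rw [MeasureTheory.setAverage_eq, smul_eq_mul, measureReal_def]
    rw [hA1, hA0]
    have hid : m1⁻¹*(a+e) - m0⁻¹*a = (e*m0 - a*Δr)/(m0*m1) := by
      rw [hm1eq]
      have h01 : m0 + Δr ≠ 0 := ne_of_gt (by linarith)
      field_simp
      ring
    rw [hid, abs_div, abs_of_pos (mul_pos hm0pos hm1pos)]
    rw [div_le_iff₀ (mul_pos hm0pos hm1pos)]
    have habs : |e * m0 - a * Δr| ≤ |e * m0| + |a * Δr| := by
      have h := abs_add_le (e * m0) (-(a * Δr))
      rw [abs_neg] at h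
      calc |e * m0 - a * Δr| = |e * m0 + -(a * Δr)| := by ring_nf
        _ ≤ |e * m0| + |a * Δr| := h
    have hnum : |e * m0 - a * Δr| ≤ 2*M*(m0*Δr) := by
      have he2 : |e * m0| = |e| * m0 := by rw [abs_mul, abs_of_nonneg hm0pos.le]
      have ha2 : |a * Δr| = |a| * Δr := by rw [abs_mul, abs_of_nonneg hΔnn]
      have h1 := mul_le_mul_of_nonneg_right hee hm0pos.le
      have h2 := mul_le_mul_of_nonneg_right hae hΔnn
      rw [he2, ha2] at habs
      ring_nf at habs h1 h2 ⊢
      linarith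
    have hΔκ : Δr ≤ κ * m1 := hκ
    have h5 : (2*M*m0)*Δr ≤ (2*M*m0)*(κ*m1) :=
      mul_le_mul_of_nonneg_left hΔκ (by positivity)
    ring_nf at hnum h5 ⊢
    linarith
  -- averages are bounded by M
  have avg_bdd : ∀ x ∈ Ω, |⨍ z in closedBall x (ϱ x), u z ∂μ| ≤ M := by
    intro x hx
    have hpos := (hballs x (ϱ x) (hadm x hx).1).1
    have hfin := (hballs x (ϱ x) (hadm x hx).1).2
    have hm0 : 0 < (μ (closedBall x (ϱ x))).toReal :=
      ENNReal.toReal_pos (ne_of_gt hpos) (ne_of_lt hfin)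
    rw [MeasureTheory.setAverage_eq, smul_eq_mul, abs_mul, measureReal_def,
      abs_of_nonneg (inv_nonneg.2 ENNReal.toReal_nonneg)]
    have hint : |∫ z in closedBall x (ϱ x), u z ∂μ| ≤ M * (μ (closedBall x (ϱ x))).toReal := by
      have := MeasureTheory.norm_setIntegral_le_of_norm_le_const (μ := μ)
        (s := closedBall x (ϱ x)) (f := u) (C := M) hfin
        (fun z hz => by rw [Real.norm_eq_abs]; exact hM z (hball_sub x hx hz))
      rwa [Real.norm_eq_abs, measureReal_def] at this
    calc (μ (closedBall x (ϱ x))).toReal⁻¹ * |∫ z in closedBall x (ϱ x), u z ∂μ|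
        ≤ (μ (closedBall x (ϱ x))).toReal⁻¹ * (M * (μ (closedBall x (ϱ x))).toReal) := by
          exact mul_le_mul_of_nonneg_left hint (inv_nonneg.2 ENNReal.toReal_nonneg)
      _ = M := by field_simp
  -- the function Ψ
  set Ψ : ℝ → ℝ := fun ρ => 4*M*Dδ*(4*(1+L))^δ * (((lam*ρ^β)^δ)⁻¹) with hΨdef
  have hΨnn : ∀ ρ : ℝ, 0 < ρ → 0 ≤ Ψ ρ := by
    intro ρ hρ
    have h1 : (0:ℝ) < lam * ρ^β := mul_pos hlam0 (Real.rpow_pos_of_pos hρ β)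
    have : (0:ℝ) ≤ (4*(1+L))^δ := Real.rpow_nonneg (by linarith) δ
    have h2 : (0:ℝ) ≤ ((lam*ρ^β)^δ)⁻¹ := inv_nonneg.2 (Real.rpow_nonneg h1.le δ)
    positivity
  -- main estimate on averages
  have avg_est : ∀ ρ : ℝ, 0 < ρ → ∀ x ∈ Ω, ∀ y ∈ Ω, ρ ≤ infDist x (frontier Ω) →
      ρ ≤ infDist y (frontier Ω) →
      |(⨍ z in closedBall x (ϱ x), u z ∂μ) - ⨍ z in closedBall y (ϱ y), u z ∂μ|
        ≤ Ψ ρ * dist x y ^ δ := by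
    intro ρ hρ x hx y hy hdx hdy
    have hΨval : Ψ ρ = 4*M*Dδ*(4*(1+L))^δ * (((lam*ρ^β)^δ)⁻¹) := by simp only [hΨdef]
    have hR00 : (0:ℝ) < lam*ρ^β := mul_pos hlam0 (Real.rpow_pos_of_pos hρ β)
    have hR0x : lam*ρ^β ≤ ϱ x := by
      refine le_trans ?_ (hbounds x hx).1
      exact mul_le_mul_of_nonneg_left (Real.rpow_le_rpow hρ.le hdx hβ0) hlam0.le
    have hR0y : lam*ρ^β ≤ ϱ y := by
      refine le_trans ?_ (hbounds y hy).1
      exact mul_le_mul_of_nonneg_left (Real.rpow_le_rpow hρ.le hdy hβ0) hlam0.le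
    set R0 := lam*ρ^β with hR0def
    have hL1 : (0:ℝ) < 1 + L := by linarith
    have hR0δ : (0:ℝ) < R0^δ := Real.rpow_pos_of_pos hR00 δ
    rcases eq_or_lt_of_le (dist_nonneg : 0 ≤ dist x y) with h0 | ht0
    · have hxy : x = y := dist_eq_zero.1 h0.symm
      subst hxy
      simp [sub_self, dist_self, Real.zero_rpow (ne_of_gt hδ)]
    · rcases le_or_gt (dist x y) (R0/(4*(1+L))) with hsmall | hbig
      · -- small distance case
        have ht4 : dist x y ≤ R0/8 := by
          refine le_trans hsmall ?_
          exact div_le_div_of_nonneg_left hR00.le (by norm_num) (by linarith)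
        have habsL := abs_le.1 (hLip x hx y hy)
        set r0 := min (ϱ x) (ϱ y - dist x y) with hr0def
        have h78 : (7:ℝ)/8*R0 ≤ r0 := by
          apply le_min
          · linarith
          · linarith
        have hr0pos : 0 < r0 := by linarith
        have hr0lex : r0 ≤ ϱ x := min_le_left _ _
        have hr0ley : r0 + dist x y ≤ ϱ y := by
          have := min_le_right (ϱ x) (ϱ y - dist x y)
          linarith
        have hs'pos : 0 < r0 - dist x y := by linarith
        have hsub1 : closedBall x r0 ⊆ closedBall x (ϱ x) := closedBall_subset_closedBall hr0lex
        have hsub2 : closedBall x r0 ⊆ closedBall y (ϱ y) := by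
          intro z hz
          rw [mem_closedBall] at hz ⊢
          calc dist z y ≤ dist z x + dist x y := dist_triangle _ _ _
            _ ≤ ϱ y := by linarith
        have hsub3 : closedBall y (r0 - dist x y) ⊆ closedBall x r0 := by
          intro z hz
          rw [mem_closedBall] at hz ⊢
          have h9 : dist z x ≤ dist z y + dist y x := dist_triangle _ _ _
          rw [dist_comm y x] at h9
          linarith
        have hμx := hballs x (ϱ x) (hadm x hx).1
        have hμy := hballs y (ϱ y) (hadm y hy).1
        have hμr0 := hballs x r0 hr0pos
        have hrat1nn : (0:ℝ) ≤ (ϱ x - r0)/(ϱ x) := div_nonneg (by linarith) (by linarith)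
        have hrat2nn : (0:ℝ) ≤ (ϱ y - (r0 - dist x y))/(ϱ y) := div_nonneg (by linarith) (by linarith)
        have hκ1 : (μ (closedBall x (ϱ x) \ closedBall x r0)).toReal
            ≤ (Dδ * (((ϱ x - r0)/(ϱ x))^δ)) * (μ (closedBall x (ϱ x))).toReal := by
          have h1 := ENNReal.toReal_mono
            (ENNReal.mul_ne_top ENNReal.ofReal_ne_top hμx.2.ne)
            (hAD x r0 (ϱ x) hr0pos hr0lex)
          rwa [ENNReal.toReal_mul, ENNReal.toReal_ofReal
            (mul_nonneg (by linarith) (Real.rpow_nonneg hrat1nn δ))] at h1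
        have hkey1 := key (closedBall x r0) (closedBall x (ϱ x))
          (Dδ * (((ϱ x - r0)/(ϱ x))^δ)) measurableSet_closedBall measurableSet_closedBall
          hsub1 (hball_sub x hx) hμr0.1 hμx.2.ne hκ1
        have hκ2 : (μ (closedBall y (ϱ y) \ closedBall x r0)).toReal
            ≤ (Dδ * (((ϱ y - (r0 - dist x y))/(ϱ y))^δ)) * (μ (closedBall y (ϱ y))).toReal := by
          have hmono2 : μ (closedBall y (ϱ y) \ closedBall x r0)
              ≤ μ (closedBall y (ϱ y) \ closedBall y (r0 - dist x y)) :=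
            measure_mono (diff_subset_diff_right hsub3)
          have h1 := ENNReal.toReal_mono
            (ENNReal.mul_ne_top ENNReal.ofReal_ne_top hμy.2.ne)
            (le_trans hmono2 (hAD y (r0 - dist x y) (ϱ y) hs'pos (by linarith)))
          rwa [ENNReal.toReal_mul, ENNReal.toReal_ofReal
            (mul_nonneg (by linarith) (Real.rpow_nonneg hrat2nn δ))] at h1
        have hkey2 := key (closedBall x r0) (closedBall y (ϱ y))
          (Dδ * (((ϱ y - (r0 - dist x y))/(ϱ y))^δ)) measurableSet_closedBall
          measurableSet_closedBall hsub2 (hball_sub y hy) hμr0.1 hμy.2.ne hκ2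
        have hratio1 : (ϱ x - r0)/(ϱ x) ≤ (1+L)*dist x y/R0 := by
          have hnum : ϱ x - r0 ≤ (1+L)*dist x y := by
            rcases le_total (ϱ x) (ϱ y - dist x y) with hc | hc
            · rw [hr0def, min_eq_left hc]; nlinarith
            · rw [hr0def, min_eq_right hc]; nlinarith
          exact div_le_div₀ (by positivity) hnum hR00 hR0x
        have hratio2 : (ϱ y - (r0 - dist x y))/(ϱ y) ≤ (1+L)*dist x y/R0 := by
          have hnum : ϱ y - (r0 - dist x y) ≤ (1+L)*dist x y := by
            rcases le_total (ϱ x) (ϱ y - dist x y) with hc | hc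
            · rw [hr0def, min_eq_left hc]; nlinarith
            · rw [hr0def, min_eq_right hc]; nlinarith
          exact div_le_div₀ (by positivity) hnum hR00 hR0y
        have hX1 : ((ϱ x - r0)/(ϱ x))^δ ≤ ((1+L)*dist x y/R0)^δ :=
          Real.rpow_le_rpow hrat1nn hratio1 hδ0
        have hX2 : ((ϱ y - (r0 - dist x y))/(ϱ y))^δ ≤ ((1+L)*dist x y/R0)^δ :=
          Real.rpow_le_rpow hrat2nn hratio2 hδ0
        have htri : |(⨍ z in closedBall x (ϱ x), u z ∂μ) - ⨍ z in closedBall y (ϱ y), u z ∂μ|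
            ≤ |(⨍ z in closedBall x (ϱ x), u z ∂μ) - ⨍ z in closedBall x r0, u z ∂μ|
            + |(⨍ z in closedBall y (ϱ y), u z ∂μ) - ⨍ z in closedBall x r0, u z ∂μ| := by
          have h1 := abs_sub_le (⨍ z in closedBall x (ϱ x), u z ∂μ)
            (⨍ z in closedBall x r0, u z ∂μ) (⨍ z in closedBall y (ϱ y), u z ∂μ)
          have h2 : |(⨍ z in closedBall x r0, u z ∂μ) - ⨍ z in closedBall y (ϱ y), u z ∂μ|
              = |(⨍ z in closedBall y (ϱ y), u z ∂μ) - ⨍ z in closedBall x r0, u z ∂μ| :=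
            abs_sub_comm _ _
          linarith
        have hXval : ((1+L)*dist x y/R0)^δ = (1+L)^δ * dist x y^δ / R0^δ := by
          rw [Real.div_rpow (by positivity) hR00.le, Real.mul_rpow hL1.le dist_nonneg]
        have hcoef : (1+L)^δ ≤ (4*(1+L))^δ :=
          Real.rpow_le_rpow hL1.le (by linarith) hδ0
        have hMD : (0:ℝ) ≤ 2*M*Dδ := by positivity
        have hb1 : 2*M*(Dδ * (((ϱ x - r0)/(ϱ x))^δ)) ≤ 2*M*Dδ*((1+L)*dist x y/R0)^δ := by
          have := mul_le_mul_of_nonneg_left hX1 hMD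
          calc 2*M*(Dδ * (((ϱ x - r0)/(ϱ x))^δ)) = 2*M*Dδ*(((ϱ x - r0)/(ϱ x))^δ) := by ring
            _ ≤ 2*M*Dδ*((1+L)*dist x y/R0)^δ := this
        have hb2 : 2*M*(Dδ * (((ϱ y - (r0 - dist x y))/(ϱ y))^δ))
            ≤ 2*M*Dδ*((1+L)*dist x y/R0)^δ := by
          have := mul_le_mul_of_nonneg_left hX2 hMD
          calc 2*M*(Dδ * (((ϱ y - (r0 - dist x y))/(ϱ y))^δ))
              = 2*M*Dδ*(((ϱ y - (r0 - dist x y))/(ϱ y))^δ) := by ring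
            _ ≤ 2*M*Dδ*((1+L)*dist x y/R0)^δ := this
        have hfin : 4*M*Dδ*((1+L)*dist x y/R0)^δ ≤ Ψ ρ * dist x y ^ δ := by
          rw [hΨval, hXval]
          have h8 := mul_le_mul_of_nonneg_left hcoef
            (show (0:ℝ) ≤ 4*M*Dδ*(dist x y^δ)*((R0^δ)⁻¹) by positivity)
          calc 4*M*Dδ*((1+L)^δ * dist x y^δ / R0^δ)
              = 4*M*Dδ*(dist x y^δ)*((R0^δ)⁻¹)*((1+L)^δ) := by ring
            _ ≤ 4*M*Dδ*(dist x y^δ)*((R0^δ)⁻¹)*((4*(1+L))^δ) := h8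
            _ = 4*M*Dδ*(4*(1+L))^δ * ((R0^δ)⁻¹) * dist x y ^ δ := by ring
        linarith
      · -- large distance case
        have h2M : |(⨍ z in closedBall x (ϱ x), u z ∂μ) - ⨍ z in closedBall y (ϱ y), u z ∂μ|
            ≤ 2*M := by
          have h1 := avg_bdd x hx
          have h2 := avg_bdd y hy
          have h := abs_add_le (⨍ z in closedBall x (ϱ x), u z ∂μ)
            (-(⨍ z in closedBall y (ϱ y), u z ∂μ))
          rw [abs_neg] at h
          have h4 : |(⨍ z in closedBall x (ϱ x), u z ∂μ) - ⨍ z in closedBall y (ϱ y), u z ∂μ|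
              = |(⨍ z in closedBall x (ϱ x), u z ∂μ) + -(⨍ z in closedBall y (ϱ y), u z ∂μ)| := by
            ring_nf
          rw [h4]
          linarith
        have hτ : 1 ≤ (4*(1+L))*dist x y/R0 := by
          rw [le_div_iff₀ hR00]
          have := (div_lt_iff₀ (by positivity : (0:ℝ) < 4*(1+L))).1 hbig
          linarith
        have hτδ : 1 ≤ ((4*(1+L))*dist x y/R0)^δ := Real.one_le_rpow hτ hδ0
        have hXval : ((4*(1+L))*dist x y/R0)^δ = (4*(1+L))^δ * dist x y^δ / R0^δ := by
          rw [Real.div_rpow (by positivity) hR00.le,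
            Real.mul_rpow (by positivity) dist_nonneg]
        have hfin : 2*M*(((4*(1+L))*dist x y/R0)^δ) ≤ Ψ ρ * dist x y ^ δ := by
          rw [hΨval, hXval]
          have hDδ4 : 2*M*((4*(1+L))^δ * dist x y^δ / R0^δ)
              ≤ 4*M*Dδ*((4*(1+L))^δ * dist x y^δ / R0^δ) := by
            have hq : (0:ℝ) ≤ (4*(1+L))^δ * dist x y^δ / R0^δ :=
              div_nonneg (mul_nonneg (Real.rpow_nonneg (by positivity) δ)
                (Real.rpow_nonneg dist_nonneg δ)) hR0δ.le
            nlinarith [mul_le_mul_of_nonneg_right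
              (by linarith : (2:ℝ) ≤ 4*Dδ)
              (mul_nonneg hM0 hq)]
          calc 2*M*((4*(1+L))^δ * dist x y^δ / R0^δ)
              ≤ 4*M*Dδ*((4*(1+L))^δ * dist x y^δ / R0^δ) := hDδ4
            _ = 4*M*Dδ*(4*(1+L))^δ * ((R0^δ)⁻¹) * dist x y ^ δ := by ring
        have h5 : 2*M ≤ 2*M*(((4*(1+L))*dist x y/R0)^δ) := by nlinarith
        linarith
  -- the scalar power-mean inequality
  have pm : ∀ a b : ℝ, 0 ≤ a → 0 ≤ b → a^δ + b^δ ≤ 2^(1-δ) * (a+b)^δ := by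
    intro a b ha hb
    rcases eq_or_lt_of_le hδ1 with h1 | h1
    · rw [h1]
      simp [Real.rpow_one]
    · have hconc := (Real.strictConcaveOn_rpow hδ h1).concaveOn
      have hmid := hconc.2 (mem_Ici.2 ha) (mem_Ici.2 hb)
        (by norm_num : (0:ℝ) ≤ 1/2) (by norm_num : (0:ℝ) ≤ 1/2) (by norm_num)
      simp only [smul_eq_mul] at hmid
      have h2 : ((1:ℝ)/2*a + 1/2*b) = (a+b)/2 := by ring
      rw [h2] at hmid
      have key2 : ((a+b)/2)^δ = (a+b)^δ / 2^δ :=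
        Real.div_rpow (by linarith : (0:ℝ) ≤ a + b) (by norm_num : (0:ℝ) ≤ 2) δ
      rw [key2] at hmid
      have h2δ : (2:ℝ)^(1-δ) = 2/2^δ := by
        rw [Real.rpow_sub (by norm_num : (0:ℝ) < 2), Real.rpow_one]
      rw [h2δ]
      have h2δpos : (0:ℝ) < 2^δ := Real.rpow_pos_of_pos (by norm_num) δ
      have hr : 2/2^δ*(a+b)^δ = 2*((a+b)^δ/2^δ) := by ring
      rw [hr]
      linarith
  -- the key scalar inequality for the two pull costs
  have cApow : ∀ x ∈ Ω, ∀ y ∈ Ω,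
      (max (dist x y + ϱ x - ϱ y) 0)^δ + (max (dist x y + ϱ y - ϱ x) 0)^δ
        ≤ 2 * L^δ * dist x y ^ δ := by
    intro x hx y hy
    have hξ : |ϱ x - ϱ y| ≤ L * dist x y := hLip x hx y hy
    have ht0 : 0 ≤ dist x y := dist_nonneg
    have hea : dist x y + ϱ x - ϱ y = dist x y + (ϱ x - ϱ y) := by ring
    have heb : dist x y + ϱ y - ϱ x = dist x y - (ϱ x - ϱ y) := by ring
    rw [hea, heb]
    set t := dist x y with htdef
    set ξ := ϱ x - ϱ y with hxidef
    have ha0 : 0 ≤ max (t + ξ) 0 := le_max_right _ _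
    have hb0 : 0 ≤ max (t - ξ) 0 := le_max_right _ _
    have hab : max (t + ξ) 0 + max (t - ξ) 0 ≤ 2*L*t := by
      have habs1 := le_abs_self ξ
      have habs2 := neg_abs_le ξ
      rcases le_or_gt (t + ξ) 0 with h1 | h1
      · rcases le_or_gt (t - ξ) 0 with h2 | h2
        · rw [max_eq_right h1, max_eq_right h2]
          nlinarith [mul_nonneg hL0.le ht0]
        · rw [max_eq_right h1, max_eq_left h2.le]
          nlinarith
      · rcases le_or_gt (t - ξ) 0 with h2 | h2
        · rw [max_eq_left h1.le, max_eq_right h2]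
          nlinarith
        · rw [max_eq_left h1.le, max_eq_left h2.le]
          nlinarith
    calc (max (t + ξ) 0)^δ + (max (t - ξ) 0)^δ
        ≤ 2^(1-δ) * (max (t + ξ) 0 + max (t - ξ) 0)^δ := pm _ _ ha0 hb0
      _ ≤ 2^(1-δ) * (2*L*t)^δ := by
          have hmono := Real.rpow_le_rpow (by linarith : (0:ℝ) ≤ max (t + ξ) 0 + max (t - ξ) 0)
            hab hδ0
          exact mul_le_mul_of_nonneg_left hmono (Real.rpow_nonneg (by norm_num) _)
      _ = 2 * L^δ * t^δ := by
          rw [Real.mul_rpow (by positivity : (0:ℝ) ≤ 2*L) ht0,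
            Real.mul_rpow (by norm_num : (0:ℝ) ≤ 2) hL0.le,
            ← mul_assoc, ← mul_assoc, ← Real.rpow_add (by norm_num : (0:ℝ) < 2)]
          norm_num
  -- the contraction constant
  set P : ℝ := (1-ε)^(β*δ) with hPdef
  have hP0 : 0 < P := Real.rpow_pos_of_pos h1ε _
  set qt : ℝ := |α| * L^δ / P with hqtdef
  have hqt0 : 0 ≤ qt := by
    have := Real.rpow_nonneg hL0.le δ
    positivity
  have hqt1 : qt < 1 := by
    rcases eq_or_ne α 0 with h0 | h0
    · rw [hqtdef, h0]
      simp [abs_zero]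
    · have hα0 : 0 < |α| := abs_pos.2 h0
      have hLα0 : 0 < L * |α| := mul_pos hL0 hα0
      have hlog1 : 0 < Real.log (1/(1-ε)) := by
        apply Real.log_pos
        rw [lt_div_iff₀ h1ε]
        linarith
      have hmul : β * Real.log (1/(1-ε)) < Real.log (1/(L*|α|)) :=
        (lt_div_iff₀ hlog1).1 hβ
      have h1 : (1/(1-ε))^β = Real.exp (β * Real.log (1/(1-ε))) := by
        rw [Real.rpow_def_of_pos (by positivity), mul_comm]
      have h2 : Real.exp (Real.log (1/(L*|α|))) = 1/(L*|α|) := Real.exp_log (by positivity)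
      have h3 : (1/(1-ε))^β < 1/(L*|α|) := by
        rw [h1, ← h2]
        exact Real.exp_lt_exp.2 hmul
      have h4 : ((1-ε)^β)⁻¹ < (L*|α|)⁻¹ := by
        rw [one_div, one_div] at h3
        rwa [Real.inv_rpow h1ε.le] at h3
      have hpow : 0 < (1-ε)^β := Real.rpow_pos_of_pos h1ε β
      have hLαβ : L*|α| < (1-ε)^β := by
        exact (inv_lt_inv₀ hpow hLα0).1 h4
      have h5 : (L*|α|)^δ < (1-ε)^(β*δ) := by
        rw [Real.rpow_mul h1ε.le]
        exact Real.rpow_lt_rpow hLα0.le hLαβ hδ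
      have h6 : |α|^(1-δ) ≤ 1 := Real.rpow_le_one hαnn hα1.le (by linarith)
      have h7 : |α| * L^δ = (L*|α|)^δ * |α|^(1-δ) := by
        rw [Real.mul_rpow hL0.le hα0.le]
        have h8 : |α|^δ * |α|^(1-δ) = |α| := by
          rw [← Real.rpow_add hα0]
          norm_num
        calc |α| * L^δ = L^δ * (|α|^δ * |α|^(1-δ)) := by rw [h8]; ring
          _ = L^δ * |α|^δ * |α|^(1-δ) := by ring
      have h9 : |α| * L^δ < P := by
        rw [h7, hPdef]
        calc (L*|α|)^δ * |α|^(1-δ) ≤ (L*|α|)^δ * 1 :=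
            mul_le_mul_of_nonneg_left h6 (Real.rpow_nonneg hLα0.le δ)
          _ = (L*|α|)^δ := mul_one _
          _ < (1-ε)^(β*δ) := h5
      rw [hqtdef, div_lt_one hP0]
      exact h9
  set G : ℝ := (1-α)/(1-qt) with hGdef
  have hG0 : 0 ≤ G := le_of_lt (div_pos h1α (by linarith))
  have hG1 : G * (1 - qt) = 1 - α :=
    div_mul_cancel₀ _ (by linarith : (1:ℝ) - qt ≠ 0)
  have hGeq : qt * G + (1-α) = G := by rw [← hG1]; ring
  -- scaling property of Ψ
  have hΨscale : ∀ ρ : ℝ, 0 < ρ → Ψ ((1-ε)*ρ) = Ψ ρ / P := by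
    intro ρ hρ
    have hρβ : (0:ℝ) < ρ^β := Real.rpow_pos_of_pos hρ β
    have h1 : ((1-ε)*ρ)^β = (1-ε)^β * ρ^β := Real.mul_rpow h1ε.le hρ.le
    have h2 : lam * ((1-ε)^β * ρ^β) = (1-ε)^β * (lam * ρ^β) := by ring
    have h3 : ((1-ε)^β * (lam*ρ^β))^δ = (1-ε)^(β*δ) * (lam*ρ^β)^δ := by
      rw [Real.mul_rpow (Real.rpow_nonneg h1ε.le β) (by positivity), Real.rpow_mul h1ε.le]
    simp only [hΨdef]
    rw [h1, h2, h3, ← hPdef, mul_inv]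
    ring
  -- the one-step estimate
  have step : ∀ ρ : ℝ, 0 < ρ → ∀ x ∈ Ω, ∀ y ∈ Ω, ρ ≤ infDist x (frontier Ω) →
      ρ ≤ infDist y (frontier Ω) →
      ∃ a a' b b' : X,
        (a ∈ Ω ∧ (1-ε)*ρ ≤ infDist a (frontier Ω)) ∧
        (a' ∈ Ω ∧ (1-ε)*ρ ≤ infDist a' (frontier Ω)) ∧
        (b ∈ Ω ∧ (1-ε)*ρ ≤ infDist b (frontier Ω)) ∧
        (b' ∈ Ω ∧ (1-ε)*ρ ≤ infDist b' (frontier Ω)) ∧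
        dist a a' ≤ max (dist x y + ϱ x - ϱ y) 0 ∧
        dist b b' ≤ max (dist x y + ϱ y - ϱ x) 0 ∧
        u x - u y ≤ (|α|/2) * (|u a - u a'| + |u b - u b'|) +
          (1-α) * |(⨍ z in closedBall x (ϱ x), u z ∂μ) - ⨍ z in closedBall y (ϱ y), u z ∂μ| := by
    intro ρ hρ x hx y hy hdx hdy
    have hux := hfix x hx
    have huy := hfix y hy
    rcases le_or_gt 0 α with hα | hα
    · obtain ⟨p, p', hp, hp', hdpp, hS⟩ := sup_le x hx y hy
      obtain ⟨q, q', hq, hq', hdqq, hI⟩ := inf_le x hx y hy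
      refine ⟨p, p', q', q, memdepth ρ hρ x hx hdx p hp, memdepth ρ hρ y hy hdy p' hp',
        memdepth ρ hρ x hx hdx q' hq', memdepth ρ hρ y hy hdy q hq, hdpp, ?_, ?_⟩
      · rw [dist_comm]; exact hdqq
      · have e1 : (α/2)*(sSup (u '' closedBall x (ϱ x)) - sSup (u '' closedBall y (ϱ y)))
            ≤ (|α|/2)*|u p - u p'| := by
          rw [abs_of_nonneg hα]
          have h2 : u p - u p' ≤ |u p - u p'| := le_abs_self _
          nlinarith
        have e2 : (α/2)*(sInf (u '' closedBall x (ϱ x)) - sInf (u '' closedBall y (ϱ y)))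
            ≤ (|α|/2)*|u q' - u q| := by
          rw [abs_of_nonneg hα]
          have h2 : u q' - u q ≤ |u q' - u q| := le_abs_self _
          nlinarith
        have e3 : (1-α)*((⨍ z in closedBall x (ϱ x), u z ∂μ) - ⨍ z in closedBall y (ϱ y), u z ∂μ)
            ≤ (1-α) * |(⨍ z in closedBall x (ϱ x), u z ∂μ) - ⨍ z in closedBall y (ϱ y), u z ∂μ| :=
          mul_le_mul_of_nonneg_left (le_abs_self _) h1α.le
        have heq : u x - u y =
            (α/2)*(sSup (u '' closedBall x (ϱ x)) - sSup (u '' closedBall y (ϱ y)))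
            + (α/2)*(sInf (u '' closedBall x (ϱ x)) - sInf (u '' closedBall y (ϱ y)))
            + (1-α)*((⨍ z in closedBall x (ϱ x), u z ∂μ) - ⨍ z in closedBall y (ϱ y), u z ∂μ) := by
          rw [hux, huy]; ring
        linarith
    · obtain ⟨p, p', hp, hp', hdpp, hS⟩ := sup_le y hy x hx
      obtain ⟨q, q', hq, hq', hdqq, hI⟩ := inf_le y hy x hx
      refine ⟨q, q', p, p', memdepth ρ hρ x hx hdx q hq, memdepth ρ hρ y hy hdy q' hq',
        memdepth ρ hρ y hy hdy p hp, memdepth ρ hρ x hx hdx p' hp', ?_, ?_, ?_⟩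
      · rw [dist_comm y x] at hdqq
        exact hdqq
      · rw [dist_comm y x] at hdpp
        exact hdpp
      · have habs : |α| = -α := abs_of_neg hα
        have e1 : (α/2)*(sSup (u '' closedBall x (ϱ x)) - sSup (u '' closedBall y (ϱ y)))
            ≤ (|α|/2)*|u p - u p'| := by
          rw [habs]
          have h2 : u p - u p' ≤ |u p - u p'| := le_abs_self _
          nlinarith
        have e2 : (α/2)*(sInf (u '' closedBall x (ϱ x)) - sInf (u '' closedBall y (ϱ y)))
            ≤ (|α|/2)*|u q' - u q| := by
          rw [habs]
          have h2 : u q' - u q ≤ |u q' - u q| := le_abs_self _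
          nlinarith
        have e3 : (1-α)*((⨍ z in closedBall x (ϱ x), u z ∂μ) - ⨍ z in closedBall y (ϱ y), u z ∂μ)
            ≤ (1-α) * |(⨍ z in closedBall x (ϱ x), u z ∂μ) - ⨍ z in closedBall y (ϱ y), u z ∂μ| :=
          mul_le_mul_of_nonneg_left (le_abs_self _) h1α.le
        have heq : u x - u y =
            (α/2)*(sSup (u '' closedBall x (ϱ x)) - sSup (u '' closedBall y (ϱ y)))
            + (α/2)*(sInf (u '' closedBall x (ϱ x)) - sInf (u '' closedBall y (ϱ y)))
            + (1-α)*((⨍ z in closedBall x (ϱ x), u z ∂μ) - ⨍ z in closedBall y (ϱ y), u z ∂μ) := by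
          rw [hux, huy]; ring
        have h4 : |u q - u q'| = |u q' - u q| := abs_sub_comm _ _
        rw [h4]
        linarith
  -- the main induction
  have claim : ∀ n : ℕ, ∀ ρ : ℝ, 0 < ρ → ∀ x ∈ Ω, ∀ y ∈ Ω, ρ ≤ infDist x (frontier Ω) →
      ρ ≤ infDist y (frontier Ω) →
      |u x - u y| ≤ |α|^n * (2*M) + G * Ψ ρ * dist x y ^ δ := by
    intro n
    induction n with
    | zero =>
      intro ρ hρ x hx y hy hdx hdy
      have h := abs_add_le (u x) (-(u y))
      rw [abs_neg] at h
      have h4 : |u x - u y| = |u x + -(u y)| := by ring_nf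
      have h2 := hM x (hΩsub hx)
      have h3 := hM y (hΩsub hy)
      have h5 : 0 ≤ G * Ψ ρ * dist x y ^ δ :=
        mul_nonneg (mul_nonneg hG0 (hΨnn ρ hρ)) (Real.rpow_nonneg dist_nonneg δ)
      rw [pow_zero, one_mul]
      linarith [h4 ▸ h]
    | succ n ih =>
      intro ρ hρ x hx y hy hdx hdy
      have hρ' : 0 < (1-ε)*ρ := mul_pos h1ε hρ
      have hΨρnn : 0 ≤ Ψ ρ := hΨnn ρ hρ
      have hΨ'nn : 0 ≤ Ψ ((1-ε)*ρ) := hΨnn _ hρ'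
      have oneside : ∀ w ∈ Ω, ∀ z ∈ Ω, ρ ≤ infDist w (frontier Ω) → ρ ≤ infDist z (frontier Ω) →
          u w - u z ≤ |α|^(n+1) * (2*M) + G * Ψ ρ * dist w z ^ δ := by
        intro w hw z hz hdw hdz
        obtain ⟨a, a', b, b', ⟨haΩ, had⟩, ⟨ha'Ω, ha'd⟩, ⟨hbΩ, hbd⟩, ⟨hb'Ω, hb'd⟩,
          hdaa, hdbb, hstep⟩ := step ρ hρ w hw z hz hdw hdz
        have iha := ih ((1-ε)*ρ) hρ' a haΩ a' ha'Ω had ha'd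
        have ihb := ih ((1-ε)*ρ) hρ' b hbΩ b' hb'Ω hbd hb'd
        have hΨ' : Ψ ((1-ε)*ρ) = Ψ ρ / P := hΨscale ρ hρ
        have hcost := cApow w hw z hz
        have havg := avg_est ρ hρ w hw z hz hdw hdz
        have hGP : 0 ≤ G * (Ψ ρ / P) := mul_nonneg hG0 (div_nonneg hΨρnn hP0.le)
        have hda : dist a a' ^ δ ≤ (max (dist w z + ϱ w - ϱ z) 0)^δ :=
          Real.rpow_le_rpow dist_nonneg hdaa hδ0
        have hdb : dist b b' ^ δ ≤ (max (dist w z + ϱ z - ϱ w) 0)^δ :=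
          Real.rpow_le_rpow dist_nonneg hdbb hδ0
        have hA2 : |u a - u a'| ≤ |α|^n*(2*M)
            + G*(Ψ ρ/P)*((max (dist w z + ϱ w - ϱ z) 0)^δ) := by
          rw [← hΨ']
          refine iha.trans ?_
          have h7 := mul_le_mul_of_nonneg_left hda (mul_nonneg hG0 hΨ'nn)
          linarith [h7]
        have hB2 : |u b - u b'| ≤ |α|^n*(2*M)
            + G*(Ψ ρ/P)*((max (dist w z + ϱ z - ϱ w) 0)^δ) := by
          rw [← hΨ']
          refine ihb.trans ?_
          have h7 := mul_le_mul_of_nonneg_left hdb (mul_nonneg hG0 hΨ'nn)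
          linarith [h7]
        calc u w - u z ≤ (|α|/2) * (|u a - u a'| + |u b - u b'|) +
              (1-α) * |(⨍ z' in closedBall w (ϱ w), u z' ∂μ) - ⨍ z' in closedBall z (ϱ z), u z' ∂μ| := hstep
          _ ≤ (|α|/2) * ((|α|^n*(2*M) + G*(Ψ ρ/P)*((max (dist w z + ϱ w - ϱ z) 0)^δ))
                + (|α|^n*(2*M) + G*(Ψ ρ/P)*((max (dist w z + ϱ z - ϱ w) 0)^δ)))
              + (1-α) * (Ψ ρ * dist w z ^ δ) := by
            refine add_le_add ?_ ?_
            · exact mul_le_mul_of_nonneg_left (add_le_add hA2 hB2) (by positivity)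
            · exact mul_le_mul_of_nonneg_left havg h1α.le
          _ = |α|^(n+1)*(2*M) + ((|α|/2)*(G*(Ψ ρ/P)))*((max (dist w z + ϱ w - ϱ z) 0)^δ
                + (max (dist w z + ϱ z - ϱ w) 0)^δ) + (1-α)*(Ψ ρ * dist w z ^ δ) := by
            ring
          _ ≤ |α|^(n+1)*(2*M) + ((|α|/2)*(G*(Ψ ρ/P)))*(2*L^δ*dist w z ^ δ)
              + (1-α)*(Ψ ρ * dist w z ^ δ) := by
            have h4 := mul_le_mul_of_nonneg_left hcost
              (show (0:ℝ) ≤ (|α|/2)*(G*(Ψ ρ/P)) by positivity)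
            linarith
          _ = |α|^(n+1)*(2*M) + (qt*G + (1-α)) * (Ψ ρ * dist w z ^ δ) := by
            rw [hqtdef]
            ring
          _ = |α|^(n+1)*(2*M) + G * Ψ ρ * dist w z ^ δ := by
            rw [hGeq]; ring
      have h1 := oneside x hx y hy hdx hdy
      have h2 := oneside y hy x hx hdy hdx
      rw [dist_comm y x] at h2
      rw [abs_sub_le_iff]
      exact ⟨h1, h2⟩
  -- conclusion
  obtain ⟨xm, hxmK, hxmmin⟩ :=
    hKcpt.exists_isMinOn ⟨x0, hx0K⟩ ((continuous_infDist_pt (frontier Ω)).continuousOn)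
  set ρK : ℝ := infDist xm (frontier Ω) with hρKdef
  have hρK0 : 0 < ρK := hdd_pos xm (hKsub hxmK)
  have hρKle : ∀ x ∈ K, ρK ≤ infDist x (frontier Ω) := fun x hx => hxmmin hx
  refine ⟨G * Ψ ρK, mul_nonneg hG0 (hΨnn ρK hρK0), ?_⟩
  intro x hx y hy
  have hlim : Filter.Tendsto (fun n : ℕ => |α|^n * (2*M) + G * Ψ ρK * dist x y ^ δ)
      Filter.atTop (nhds (0 * (2*M) + G * Ψ ρK * dist x y ^ δ)) := by
    exact Filter.Tendsto.add
      (Filter.Tendsto.mul_const _ (tendsto_pow_atTop_nhds_zero_of_lt_one hαnn hα1))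
      tendsto_const_nhds
  have := ge_of_tendsto' hlim (fun n =>
    claim n ρK hρK0 x (hKsub hx) y (hKsub hy) (hρKle x hx) (hρKle y hy))
  simpa using this
end
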